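/- Consider the greedy online algorithm on the partition matroid M_{m,M} whose parts are m singletons {r^1},...,{r^m} and M blocks of m consecutive elements each, with elements arriving in uniformly random order. Then for every element r^i with i ≤ m, Pr(r^i ∈ ALG) = 1; for every i > m, Pr(r^i ∈ ALG) = 1/m; consequently for every k, E[|ALG ∩ R^k|] = min(k,m) + max(k−m,0)/m, and the algorithm is (1 + 1/m) ordinal-competitive, i.e., |OPT ∩ R^k| ≤ (1+1/m)·E[|ALG ∩ R^k|] for all k. -/

import Mathlib

open Finset

/-- The part of element `i`: the first `m` elements are singleton parts, and the
remaining elements come in consecutive blocks of size `m`. -/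
def part (m : ℕ) {n : ℕ} (i : Fin n) : ℕ :=
  if (i : ℕ) < m then (i : ℕ) else m + ((i : ℕ) - m) / m

/-- Independence in the partition matroid: at most one element per part. -/
def pIndep (m : ℕ) {n : ℕ} (S : Finset (Fin n)) : Prop :=
  ∀ i ∈ S, ∀ j ∈ S, part m i = part m j → i = j

instance (m n : ℕ) (S : Finset (Fin n)) : Decidable (pIndep m S) :=
  inferInstanceAs (Decidable (∀ i ∈ S, ∀ j ∈ S, part m i = part m j → i = j))

/-- The greedy online algorithm run on arrival order `σ` (the `t`-th arrival is `σ t`):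
select each arriving element iff it keeps the current selection independent. -/
def greedyALG (m : ℕ) {n : ℕ} (σ : Equiv.Perm (Fin n)) : Finset (Fin n) :=
  (List.ofFn fun t => σ t).foldl
    (fun S r => if pIndep m (insert r S) then insert r S else S) ∅

/-- The top `k` elements `R^k` (smaller index = higher value). -/
def topk (n k : ℕ) : Finset (Fin n) := Finset.univ.filter fun i => (i : ℕ) < k

/-! ### Auxiliary lemmas -/

lemma foldl_sel (m n : ℕ) (σ : Equiv.Perm (Fin n)) :
    ∀ t, t ≤ n →
    ((List.ofFn fun s => σ s).take t).foldl
      (fun S r => if pIndep m (insert r S) then insert r S else S) ∅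
    = Finset.univ.filter (fun i : Fin n =>
        (σ.symm i : ℕ) < t ∧ ∀ j, part m j = part m i → σ.symm i ≤ σ.symm j) := by
  intro t
  induction t with
  | zero => intro _; simp
  | succ t ih =>
    intro ht
    have ht' : t < n := ht
    have htake : (List.ofFn fun s => σ s).take (t+1)
        = (List.ofFn fun s => σ s).take t ++ [σ ⟨t, ht'⟩] := by
      rw [List.take_succ]
      simp [List.getElem?_ofFn, ht']
    rw [htake, List.foldl_append, ih (le_of_lt ht')]
    simp only [List.foldl_cons, List.foldl_nil]
    set r : Fin n := σ ⟨t, ht'⟩ with hr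
    have hsr : σ.symm r = ⟨t, ht'⟩ := by simp [hr]
    have hsrv : (σ.symm r : ℕ) = t := by rw [hsr]
    set S := Finset.univ.filter (fun i : Fin n =>
        (σ.symm i : ℕ) < t ∧ ∀ j, part m j = part m i → σ.symm i ≤ σ.symm j) with hS
    by_cases hmin : ∀ j, part m j = part m r → (σ.symm r) ≤ σ.symm j
    · have hind : pIndep m (insert r S) := by
        intro a ha b hb hab
        rcases Finset.mem_insert.1 ha with rfl | ha
        · rcases Finset.mem_insert.1 hb with rfl | hb
          · rfl
          · exfalso
            rw [hS, Finset.mem_filter] at hb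
            have h1 := hmin b hab.symm
            have h2 := hb.2.1
            rw [Fin.le_def, hsrv] at h1
            omega
        · rcases Finset.mem_insert.1 hb with rfl | hb
          · exfalso
            rw [hS, Finset.mem_filter] at ha
            have h1 := hmin a hab
            have h2 := ha.2.1
            rw [Fin.le_def, hsrv] at h1
            omega
          · rw [hS, Finset.mem_filter] at ha hb
            have h1 := ha.2.2 b hab.symm
            have h2 := hb.2.2 a hab
            exact σ.symm.injective (le_antisymm h1 h2)
      rw [if_pos hind]
      ext i
      simp only [Finset.mem_insert, hS, Finset.mem_filter, Finset.mem_univ, true_and]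
      constructor
      · rintro (rfl | ⟨h1, h2⟩)
        · exact ⟨by omega, hmin⟩
        · exact ⟨by omega, h2⟩
      · rintro ⟨h1, h2⟩
        by_cases hi : i = r
        · exact Or.inl hi
        · refine Or.inr ⟨?_, h2⟩
          have : (σ.symm i : ℕ) ≠ t := by
            intro h
            apply hi
            have : σ.symm i = σ.symm r := Fin.ext (by omega)
            exact σ.symm.injective this
          omega
    · push_neg at hmin
      obtain ⟨j0, hj0p, hj0⟩ := hmin
      have hj0t : (σ.symm j0 : ℕ) < t := by
        have := Fin.lt_def.1 hj0
        omega
      obtain ⟨j1, hj1mem, hj1min⟩ := Finset.exists_min_image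
        (Finset.univ.filter (fun j : Fin n => part m j = part m r)) (fun j => σ.symm j)
        ⟨j0, by simpa using hj0p⟩
      have hj1p : part m j1 = part m r := (Finset.mem_filter.1 hj1mem).2
      have hj1le : σ.symm j1 ≤ σ.symm j0 := hj1min j0 (by simpa using hj0p)
      have hj1t : (σ.symm j1 : ℕ) < t := lt_of_le_of_lt (Fin.le_def.1 hj1le) hj0t
      have hj1S : j1 ∈ S := by
        rw [hS, Finset.mem_filter]
        refine ⟨Finset.mem_univ _, hj1t, fun j hj => hj1min j (by simp [hj, hj1p])⟩
      have hind : ¬ pIndep m (insert r S) := by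
        intro h
        have heq := h r (Finset.mem_insert_self _ _) j1 (Finset.mem_insert_of_mem hj1S) hj1p.symm
        rw [← heq] at hj1t
        omega
      rw [if_neg hind]
      ext i
      simp only [hS, Finset.mem_filter, Finset.mem_univ, true_and]
      constructor
      · rintro ⟨h1, h2⟩; exact ⟨by omega, h2⟩
      · rintro ⟨h1, h2⟩
        refine ⟨?_, h2⟩
        rcases Nat.lt_succ_iff_lt_or_eq.1 h1 with h | h
        · exact h
        · exfalso
          have : σ.symm i = σ.symm r := Fin.ext (by omega)
          have hi : i = r := σ.symm.injective this
          subst hi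
          exact absurd (h2 j0 hj0p) (not_le.2 hj0)

lemma mem_greedy_iff (m : ℕ) {n : ℕ} (σ : Equiv.Perm (Fin n)) (i : Fin n) :
    i ∈ greedyALG m σ ↔ ∀ j, part m j = part m i → σ.symm i ≤ σ.symm j := by
  have h : greedyALG m σ = ((List.ofFn fun s => σ s).take n).foldl
      (fun S r => if pIndep m (insert r S) then insert r S else S) ∅ := by
    rw [greedyALG]
    congr 1
    rw [List.take_of_length_le (by simp)]
  rw [h, foldl_sel m n σ n le_rfl]
  simp only [Finset.mem_filter, Finset.mem_univ, true_and]
  constructor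
  · exact fun h => h.2
  · exact fun h => ⟨(σ.symm i).isLt, h⟩

lemma count_min (n : ℕ) (P : Finset (Fin n)) (i : Fin n) (hi : i ∈ P) :
    (Finset.univ.filter (fun σ : Equiv.Perm (Fin n) =>
        ∀ j ∈ P, σ.symm i ≤ σ.symm j)).card * P.card
      = Fintype.card (Equiv.Perm (Fin n)) := by
  classical
  set A : Fin n → Finset (Equiv.Perm (Fin n)) := fun j =>
    Finset.univ.filter (fun σ => ∀ l ∈ P, σ.symm j ≤ σ.symm l) with hA
  have hcardeq : ∀ j ∈ P, (A j).card = (A i).card := by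
    intro j hj
    apply Finset.card_bij' (fun σ _ => Equiv.swap i j * σ) (fun σ _ => Equiv.swap i j * σ)
    · intro σ hσ
      simp only [hA, Finset.mem_filter, Finset.mem_univ, true_and] at hσ ⊢
      intro l hl
      have h1 : (Equiv.swap i j * σ).symm i = σ.symm j := by
        simp [Equiv.Perm.mul_def, Equiv.symm_trans_apply]
      have h2 : (Equiv.swap i j * σ).symm l = σ.symm (Equiv.swap i j l) := by
        simp [Equiv.Perm.mul_def, Equiv.symm_trans_apply]
      rw [h1, h2]
      apply hσ
      by_cases hli : l = i
      · subst hli; rw [Equiv.swap_apply_left]; exact hj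
      by_cases hlj : l = j
      · subst hlj; rw [Equiv.swap_apply_right]; exact hi
      · rw [Equiv.swap_apply_of_ne_of_ne hli hlj]; exact hl
    · intro σ hσ
      simp only [hA, Finset.mem_filter, Finset.mem_univ, true_and] at hσ ⊢
      intro l hl
      have h1 : (Equiv.swap i j * σ).symm j = σ.symm i := by
        simp [Equiv.Perm.mul_def, Equiv.symm_trans_apply]
      have h2 : (Equiv.swap i j * σ).symm l = σ.symm (Equiv.swap i j l) := by
        simp [Equiv.Perm.mul_def, Equiv.symm_trans_apply]
      rw [h1, h2]
      apply hσ
      by_cases hli : l = i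
      · subst hli; rw [Equiv.swap_apply_left]; exact hj
      by_cases hlj : l = j
      · subst hlj; rw [Equiv.swap_apply_right]; exact hi
      · rw [Equiv.swap_apply_of_ne_of_ne hli hlj]; exact hl
    · intro σ _; rw [← mul_assoc]; simp
    · intro σ _; rw [← mul_assoc]; simp
  have hcover : Finset.univ = P.biUnion A := by
    ext σ
    simp only [Finset.mem_univ, Finset.mem_biUnion, true_iff]
    obtain ⟨j, hjP, hjmin⟩ := Finset.exists_min_image P (fun j => σ.symm j) ⟨i, hi⟩
    exact ⟨j, hjP, by simp only [hA, Finset.mem_filter, Finset.mem_univ, true_and]; exact hjmin⟩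
  have hdisj : ∀ x ∈ P, ∀ y ∈ P, x ≠ y → Disjoint (A x) (A y) := by
    intro x hx y hy hxy
    rw [Finset.disjoint_left]
    intro σ hσx hσy
    simp only [hA, Finset.mem_filter, Finset.mem_univ, true_and] at hσx hσy
    exact hxy (σ.symm.injective (le_antisymm (hσx y hy) (hσy x hx)))
  have : Fintype.card (Equiv.Perm (Fin n)) = ∑ j ∈ P, (A j).card := by
    rw [← Finset.card_univ, hcover, Finset.card_biUnion hdisj]
  rw [this, Finset.sum_congr rfl hcardeq, Finset.sum_const, smul_eq_mul, mul_comm]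

lemma div_eq_iff' {m x q : ℕ} (hm : 0 < m) : x / m = q ↔ q * m ≤ x ∧ x < q * m + m := by
  constructor
  · rintro rfl
    refine ⟨Nat.div_mul_le_self x m, ?_⟩
    have h1 : x / m < x / m + 1 := Nat.lt_succ_self _
    have h2 := (Nat.div_lt_iff_lt_mul hm).1 h1
    have h3 : (x / m + 1) * m = x / m * m + m := by ring
    omega
  · rintro ⟨h1, h2⟩
    refine Nat.div_eq_of_lt_le h1 ?_
    have h3 : (q + 1) * m = q * m + m := by ring
    omega

lemma part_eq_iff {m n : ℕ} (hm : 1 ≤ m) (q : ℕ) (j : Fin n) :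
    part m j = m + q ↔ m + q * m ≤ (j : ℕ) ∧ (j : ℕ) < m + q * m + m := by
  unfold part
  by_cases hj : (j : ℕ) < m
  · rw [if_pos hj]
    constructor
    · intro h; omega
    · intro h; omega
  · rw [if_neg hj]
    have h := div_eq_iff' (x := (j : ℕ) - m) (q := q) hm
    constructor
    · intro he
      have : ((j : ℕ) - m) / m = q := by omega
      have := h.1 this
      omega
    · intro he
      have : ((j : ℕ) - m) / m = q := h.2 (by omega)
      omega

lemma part_card {m M n : ℕ} (hm : 1 ≤ m) (hn : n = (M + 1) * m) (i : Fin n)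
    (hi : m ≤ (i : ℕ)) :
    (Finset.univ.filter (fun j : Fin n => part m j = part m i)).card = m := by
  set q := ((i : ℕ) - m) / m with hq
  have hpi : part m i = m + q := by unfold part; rw [if_neg (by omega)]
  have hiq : m + q * m ≤ (i : ℕ) ∧ (i : ℕ) < m + q * m + m := (part_eq_iff hm q i).1 hpi
  have hub : m + q * m + m ≤ n := by
    have h1 : (i : ℕ) < n := i.isLt
    have h2 : q * m ≤ (i : ℕ) - m := by rw [hq]; exact Nat.div_mul_le_self _ _
    have hnm : (M + 1) * m = M * m + m := by ring
    have h3 : q * m < M * m := by omega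
    have h4 : q < M := lt_of_mul_lt_mul_right h3 (Nat.zero_le m)
    have h6 : (q + 1) * m ≤ M * m := Nat.mul_le_mul_right m h4
    have h7 : (q + 1) * m = q * m + m := by ring
    omega
  rw [show (Finset.univ.filter (fun j : Fin n => part m j = part m i)).card
      = (Finset.Ico (m + q * m) (m + q * m + m)).card from ?_, Nat.card_Ico]
  · omega
  · refine Finset.card_bij (fun j _ => (j : ℕ)) ?_ ?_ ?_
    · intro j hj
      simp only [Finset.mem_filter, Finset.mem_univ, true_and, hpi] at hj
      have := (part_eq_iff hm q j).1 hj
      simp [Finset.mem_Ico]; omega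
    · intro a ha b hb hab; exact Fin.ext hab
    · intro x hx
      simp only [Finset.mem_Ico] at hx
      refine ⟨⟨x, by omega⟩, ?_, rfl⟩
      simp only [Finset.mem_filter, Finset.mem_univ, true_and, hpi]
      exact (part_eq_iff hm q _).2 (by simpa using hx)

lemma topk_card {n k : ℕ} (hk : k ≤ n) : (topk n k).card = k := by
  rw [show (topk n k).card = (Finset.range k).card from ?_, Finset.card_range]
  refine Finset.card_bij (fun j _ => (j : ℕ)) ?_ ?_ ?_
  · intro j hj; simp only [topk, Finset.mem_filter] at hj; simp [hj.2]
  · intro a _ b _ hab; exact Fin.ext hab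
  · intro x hx
    simp only [Finset.mem_range] at hx
    exact ⟨⟨x, by omega⟩, by simp [topk, hx], rfl⟩

lemma greedy_all (m : ℕ) {n : ℕ} (hm : 1 ≤ m) (i : Fin n) (hi : (i : ℕ) < m)
    (σ : Equiv.Perm (Fin n)) : i ∈ greedyALG m σ := by
  rw [mem_greedy_iff]
  intro j hj
  have hpi : part m i = (i : ℕ) := if_pos hi
  have : j = i := by
    by_cases hjm : (j : ℕ) < m
    · have : part m j = (j : ℕ) := if_pos hjm
      rw [this, hpi] at hj
      exact Fin.ext hj
    · exfalso
      have : part m j = m + ((j : ℕ) - m) / m := if_neg hjm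
      rw [this, hpi] at hj
      have h9 : m ≤ (i : ℕ) := hj ▸ Nat.le_add_right m _
      omega
  rw [this]

lemma opt_mem {m M n : ℕ} (hm : 1 ≤ m) (hn : n = (M + 1) * m) (i : Fin n)
    (hig : i ∈ greedyALG m (1 : Equiv.Perm (Fin n))) (him : m ≤ (i : ℕ)) :
    m ∣ (i : ℕ) := by
  rw [mem_greedy_iff] at hig
  set q := ((i : ℕ) - m) / m with hq
  have hpi : part m i = m + q := by unfold part; rw [if_neg (by omega)]
  have hiq := (part_eq_iff hm q i).1 hpi
  have hlt : m + q * m < n := by omega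
  set j : Fin n := ⟨m + q * m, hlt⟩ with hj
  have hpj : part m j = m + q := by
    refine (part_eq_iff hm q j).2 ?_
    simp [hj]
    omega
  have := hig j (by rw [hpj, hpi])
  simp only [Equiv.Perm.one_def, Equiv.symm] at this
  have hle : (i : ℕ) ≤ m + q * m := by
    have h := Fin.le_def.1 this
    simpa [hj] using h
  have : (i : ℕ) = (q + 1) * m := by
    have : (q + 1) * m = q * m + m := by ring
    omega
  exact ⟨q + 1, by rw [this]; ring⟩

lemma opt_card_le {m M n : ℕ} (hm : 1 ≤ m) (hn : n = (M + 1) * m) (k : ℕ) (hk : k ≤ n) :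
    (greedyALG m (1 : Equiv.Perm (Fin n)) ∩ topk n k).card ≤ min k m + (k - 1) / m := by
  have hsub : greedyALG m (1 : Equiv.Perm (Fin n)) ∩ topk n k ⊆
      topk n (min k m) ∪
      (Finset.univ.filter fun i : Fin n => m ≤ (i : ℕ) ∧ (i : ℕ) < k ∧ m ∣ (i : ℕ)) := by
    intro i hi
    rw [Finset.mem_inter] at hi
    obtain ⟨hig, hitop⟩ := hi
    have hik : (i : ℕ) < k := by simpa [topk] using hitop
    rw [Finset.mem_union]
    by_cases him : (i : ℕ) < m
    · left; simp [topk]; omega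
    · right
      simp only [Finset.mem_filter, Finset.mem_univ, true_and]
      exact ⟨by omega, hik, opt_mem hm hn i hig (by omega)⟩
  calc (greedyALG m (1 : Equiv.Perm (Fin n)) ∩ topk n k).card
      ≤ _ := Finset.card_le_card hsub
    _ ≤ (topk n (min k m)).card
        + (Finset.univ.filter fun i : Fin n => m ≤ (i : ℕ) ∧ (i : ℕ) < k ∧ m ∣ (i : ℕ)).card :=
        Finset.card_union_le _ _
    _ ≤ min k m + (k - 1) / m := by
        gcongr
        · rw [topk_card (le_trans (min_le_left _ _) hk)]
        · rw [show (k - 1) / m = (Finset.range ((k - 1) / m)).card from (Finset.card_range _).symm]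
          refine Finset.card_le_card_of_injOn (fun i => (i : ℕ) / m - 1) ?_ ?_
          · intro i hi
            simp only [Finset.mem_coe, Finset.mem_filter, Finset.mem_univ, true_and] at hi
            obtain ⟨h1, h2, t, hit⟩ := hi
            have ht1 : 1 ≤ t := by
              rcases Nat.eq_zero_or_pos t with rfl | h
              · omega
              · exact h
            have hdiv : (i : ℕ) / m = t := by
              rw [hit]; exact Nat.mul_div_cancel_left t (by omega)
            simp only [Finset.mem_coe, Finset.mem_range, hdiv]
            have h3 : t * m ≤ k - 1 := by
              have : t * m = m * t := by ring
              omega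
            have := (Nat.le_div_iff_mul_le (by omega : 0 < m)).2 h3
            omega
          · intro a ha b hb hab
            simp only [Finset.coe_filter, Set.mem_setOf_eq, Finset.mem_univ, true_and] at ha hb
            obtain ⟨ha1, ha2, s, hs⟩ := ha
            obtain ⟨hb1, hb2, t, ht⟩ := hb
            have hs1 : 1 ≤ s := by
              rcases Nat.eq_zero_or_pos s with rfl | h
              · omega
              · exact h
            have ht1 : 1 ≤ t := by
              rcases Nat.eq_zero_or_pos t with rfl | h
              · omega
              · exact h
            have hda : (a : ℕ) / m = s := by rw [hs]; exact Nat.mul_div_cancel_left s (by omega)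
            have hdb : (b : ℕ) / m = t := by rw [ht]; exact Nat.mul_div_cancel_left t (by omega)
            simp only [hda, hdb] at hab
            have hst : s = t := by omega
            exact Fin.ext (by rw [hs, ht, hst])

theorem greedy_partition_matroid_ordinal (m M n : ℕ) (hm : 1 ≤ m) (hM : 1 ≤ M)
    (hn : n = (M + 1) * m) :
    (∀ i : Fin n, (i : ℕ) < m → ∀ σ : Equiv.Perm (Fin n), i ∈ greedyALG m σ) ∧
    (∀ i : Fin n, m ≤ (i : ℕ) →
      (Finset.univ.filter fun σ : Equiv.Perm (Fin n) => i ∈ greedyALG m σ).card * m =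
        Fintype.card (Equiv.Perm (Fin n))) ∧
    (∀ k, k ≤ n →
      ∑ σ : Equiv.Perm (Fin n), ((greedyALG m σ ∩ topk n k).card : ℝ) =
        (Fintype.card (Equiv.Perm (Fin n)) : ℝ) *
          ((min k m : ℕ) + ((k : ℝ) - (min k m : ℕ)) / m)) ∧
    (∀ k, k ≤ n →
      (((greedyALG m (1 : Equiv.Perm (Fin n)) ∩ topk n k).card : ℝ)) ≤
        (1 + 1 / (m : ℝ)) *
          ((∑ σ : Equiv.Perm (Fin n), ((greedyALG m σ ∩ topk n k).card : ℝ)) /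
            (Fintype.card (Equiv.Perm (Fin n)) : ℝ))) := by
  have hm0 : (0 : ℝ) < m := by exact_mod_cast hm
  have part1 : ∀ i : Fin n, (i : ℕ) < m → ∀ σ : Equiv.Perm (Fin n), i ∈ greedyALG m σ :=
    fun i hi σ => greedy_all m hm i hi σ
  have part2 : ∀ i : Fin n, m ≤ (i : ℕ) →
      (Finset.univ.filter fun σ : Equiv.Perm (Fin n) => i ∈ greedyALG m σ).card * m =
        Fintype.card (Equiv.Perm (Fin n)) := by
    intro i hi
    have hP := count_min n (Finset.univ.filter (fun j : Fin n => part m j = part m i)) i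
      (by simp)
    rw [part_card hm hn i hi] at hP
    rw [← hP]
    congr 2
    apply Finset.filter_congr
    intro σ _
    rw [mem_greedy_iff]
    constructor
    · intro h j hj
      exact h j (by simpa using hj)
    · intro h j hj
      exact h j (by simpa using hj)
  have hcount2 : ∀ i : Fin n, m ≤ (i : ℕ) →
      ((Finset.univ.filter fun σ : Equiv.Perm (Fin n) => i ∈ greedyALG m σ).card : ℝ)
        = (Fintype.card (Equiv.Perm (Fin n)) : ℝ) / m := by
    intro i hi
    rw [eq_div_iff (ne_of_gt hm0)]
    exact_mod_cast part2 i hi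
  have part3 : ∀ k, k ≤ n →
      ∑ σ : Equiv.Perm (Fin n), ((greedyALG m σ ∩ topk n k).card : ℝ) =
        (Fintype.card (Equiv.Perm (Fin n)) : ℝ) *
          ((min k m : ℕ) + ((k : ℝ) - (min k m : ℕ)) / m) := by
    intro k hk
    have hmin_le : min k m ≤ n := le_trans (min_le_left _ _) hk
    have step1 : ∀ σ : Equiv.Perm (Fin n),
        ((greedyALG m σ ∩ topk n k).card : ℝ)
          = ∑ i ∈ topk n k, (if i ∈ greedyALG m σ then (1 : ℝ) else 0) := by
      intro σ
      rw [Finset.inter_comm, ← Finset.filter_mem_eq_inter, Finset.card_filter]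
      push_cast
      rfl
    rw [Finset.sum_congr rfl (fun σ _ => step1 σ), Finset.sum_comm]
    have step2 : ∀ i ∈ topk n k,
        (∑ σ : Equiv.Perm (Fin n), if i ∈ greedyALG m σ then (1 : ℝ) else 0)
        = ((Finset.univ.filter fun σ : Equiv.Perm (Fin n) => i ∈ greedyALG m σ).card : ℝ) := by
      intro i _
      rw [Finset.sum_boole]
    rw [Finset.sum_congr rfl step2,
      ← Finset.sum_filter_add_sum_filter_not (topk n k) (fun i : Fin n => (i : ℕ) < m)]
    have hf1 : (topk n k).filter (fun i : Fin n => (i : ℕ) < m) = topk n (min k m) := by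
      ext i
      simp only [topk, Finset.mem_filter, Finset.mem_univ, true_and, lt_min_iff]
    have hc1 : ((topk n k).filter (fun i : Fin n => (i : ℕ) < m)).card = min k m := by
      rw [hf1, topk_card hmin_le]
    have hcards : ((topk n k).filter (fun i : Fin n => (i : ℕ) < m)).card
        + ((topk n k).filter (fun i : Fin n => ¬ (i : ℕ) < m)).card = k := by
      rw [Finset.card_filter_add_card_filter_not, topk_card hk]
    have hc2 : ((topk n k).filter (fun i : Fin n => ¬ (i : ℕ) < m)).card = k - min k m := by
      omega
    have hsum1 : ∑ i ∈ (topk n k).filter (fun i : Fin n => (i : ℕ) < m),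
        ((Finset.univ.filter fun σ : Equiv.Perm (Fin n) => i ∈ greedyALG m σ).card : ℝ)
        = ((min k m : ℕ) : ℝ) * (Fintype.card (Equiv.Perm (Fin n)) : ℝ) := by
      have he : ∀ i ∈ (topk n k).filter (fun i : Fin n => (i : ℕ) < m),
          ((Finset.univ.filter fun σ : Equiv.Perm (Fin n) => i ∈ greedyALG m σ).card : ℝ)
          = (Fintype.card (Equiv.Perm (Fin n)) : ℝ) := by
        intro i hi
        have him : (i : ℕ) < m := (Finset.mem_filter.1 hi).2
        have hfu : (Finset.univ.filter fun σ : Equiv.Perm (Fin n) => i ∈ greedyALG m σ)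
            = Finset.univ := Finset.filter_true_of_mem (fun σ _ => part1 i him σ)
        rw [hfu, Finset.card_univ]
      rw [Finset.sum_congr rfl he, Finset.sum_const, nsmul_eq_mul, hc1]
    have hsum2 : ∑ i ∈ (topk n k).filter (fun i : Fin n => ¬ (i : ℕ) < m),
        ((Finset.univ.filter fun σ : Equiv.Perm (Fin n) => i ∈ greedyALG m σ).card : ℝ)
        = ((k - min k m : ℕ) : ℝ) * ((Fintype.card (Equiv.Perm (Fin n)) : ℝ) / m) := by
      have he : ∀ i ∈ (topk n k).filter (fun i : Fin n => ¬ (i : ℕ) < m),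
          ((Finset.univ.filter fun σ : Equiv.Perm (Fin n) => i ∈ greedyALG m σ).card : ℝ)
          = (Fintype.card (Equiv.Perm (Fin n)) : ℝ) / m :=
        fun i hi => hcount2 i (not_lt.1 (Finset.mem_filter.1 hi).2)
      rw [Finset.sum_congr rfl he, Finset.sum_const, nsmul_eq_mul, hc2]
    rw [hsum1, hsum2]
    have hcast : ((k - min k m : ℕ) : ℝ) = (k : ℝ) - ((min k m : ℕ) : ℝ) := by
      have := min_le_left k m
      push_cast [Nat.cast_sub this]
      ring
    rw [hcast]
    field_simp
  refine ⟨part1, part2, part3, ?_⟩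
  intro k hk
  have hN0 : (0 : ℝ) < (Fintype.card (Equiv.Perm (Fin n)) : ℝ) := by
    exact_mod_cast Fintype.card_pos
  rw [part3 k hk, mul_div_cancel_left₀ _ (ne_of_gt hN0)]
  have hcard := opt_card_le hm hn k hk
  have hcardR : ((greedyALG m (1 : Equiv.Perm (Fin n)) ∩ topk n k).card : ℝ)
      ≤ ((min k m : ℕ) : ℝ) + (((k - 1) / m : ℕ) : ℝ) := by exact_mod_cast hcard
  rcases le_or_gt k m with hkm | hkm
  · have ha : min k m = k := min_eq_left hkm
    have hdiv : (k - 1) / m = 0 := Nat.div_eq_of_lt (by omega)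
    rw [ha] at hcardR ⊢
    rw [hdiv] at hcardR
    simp only [Nat.cast_zero, add_zero] at hcardR
    rw [show ((k : ℝ) - ((k : ℕ) : ℝ)) = 0 by norm_num, zero_div, add_zero]
    have hk0 : (0 : ℝ) ≤ (k : ℝ) := Nat.cast_nonneg k
    have h1m : (0 : ℝ) ≤ 1 / (m : ℝ) := le_of_lt (one_div_pos.2 hm0)
    nlinarith
  · have ha : min k m = m := min_eq_right (le_of_lt hkm)
    rw [ha] at hcardR ⊢
    have hd1 : (((k - 1) / m : ℕ) : ℝ) ≤ ((k - 1 : ℕ) : ℝ) / m := Nat.cast_div_le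
    have hd2 : ((k - 1 : ℕ) : ℝ) = (k : ℝ) - 1 := by
      have h1 : 1 ≤ k := by omega
      push_cast [Nat.cast_sub h1]
      ring
    rw [hd2] at hd1
    have hK : (m : ℝ) ≤ (k : ℝ) := by exact_mod_cast le_of_lt hkm
    have key : ((k : ℝ) - 1) / m ≤ (k : ℝ) / m := by gcongr; linarith
    have key2 : (k : ℝ) / m = ((k : ℝ) - m) / m + 1 := by field_simp; ring
    have hexp : (1 + 1 / (m : ℝ)) * ((m : ℝ) + ((k : ℝ) - m) / m)
        = (m : ℝ) + ((k : ℝ) - m) / m + 1 + ((k : ℝ) - m) / (m * m) := by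
      field_simp
      ring
    have hnn : (0 : ℝ) ≤ ((k : ℝ) - m) / (m * m) :=
      div_nonneg (by linarith) (by positivity)
    linarith
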